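/- For every GPOVM M and every g : G, the minimax risk is invariant under twisting: D_max (M_g) = D_max M. -/

import Mathlib

open MeasureTheory
open scoped Kronecker Matrix ComplexOrder

noncomputable section

namespace GroupEstimation

variable {G : Type} [Group G] [TopologicalSpace G] [IsTopologicalGroup G]
  [CompactSpace G] [T2Space G] [MeasurableSpace G] [BorelSpace G]

/-- Vectorization of a square matrix. -/
def vec {d : ℕ} (A : Matrix (Fin d) (Fin d) ℂ) : EuclideanSpace ℂ (Fin d × Fin d) :=
  WithLp.toLp 2 (fun p : Fin d × Fin d => A p.1 p.2)

/-- The rank-one state `|f(g)⟩⟩⟨⟨f(g)|`. -/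
def rho {d : ℕ} (f : G → Matrix (Fin d) (Fin d) ℂ) (g : G) :
    Matrix (Fin d × Fin d) (Fin d × Fin d) ℂ :=
  fun p q => f g p.1 p.2 * star (f g q.1 q.2)

/-- `A g = f g ⊗ₖ 1`. -/
def Amat {d : ℕ} (f : G → Matrix (Fin d) (Fin d) ℂ) (g : G) :
    Matrix (Fin d × Fin d) (Fin d × Fin d) ℂ :=
  f g ⊗ₖ (1 : Matrix (Fin d) (Fin d) ℂ)

/-- The average state `ρμ` (entrywise Bochner integral). -/
def rhoMu (μ : Measure G) {d : ℕ} (f : G → Matrix (Fin d) (Fin d) ℂ) :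
    Matrix (Fin d × Fin d) (Fin d × Fin d) ℂ :=
  fun p q => ∫ g, rho f g p q ∂μ

/-- positivity, vanishing at ∅ and countable additivity (the "measure part" of a GPOVM). -/
def IsPreGPOVM {d : ℕ} (M : Set G → Matrix (Fin d × Fin d) (Fin d × Fin d) ℂ) : Prop :=
  (∀ B : Set G, MeasurableSet B → (M B).PosSemidef) ∧ M ∅ = 0 ∧
    ∀ B : ℕ → Set G, (∀ j, MeasurableSet (B j)) → Pairwise (Function.onFun Disjoint B) →
      M (⋃ j, B j) = ∑' j, M (B j)

/-- Generalized POVM. -/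
def IsGPOVM (μ : Measure G) {d : ℕ} (f : G → Matrix (Fin d) (Fin d) ℂ)
    (M : Set G → Matrix (Fin d × Fin d) (Fin d × Fin d) ℂ) : Prop :=
  IsPreGPOVM M ∧ (M Set.univ * rhoMu μ f).trace = 1

/-- Covariance of a GPOVM. -/
def IsCovariant {d : ℕ} (f : G → Matrix (Fin d) (Fin d) ℂ)
    (M : Set G → Matrix (Fin d × Fin d) (Fin d × Fin d) ℂ) : Prop :=
  ∀ (g : G) (B : Set G), MeasurableSet B →
    M ((g * ·) '' B) = Amat f g * M B * (Amat f g)ᴴ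

/-- The covariant GPOVM with seed `T`. -/
def MT (μ : Measure G) {d : ℕ} (f : G → Matrix (Fin d) (Fin d) ℂ)
    (T : Matrix (Fin d × Fin d) (Fin d × Fin d) ℂ) (B : Set G) :
    Matrix (Fin d × Fin d) (Fin d × Fin d) ℂ :=
  fun p q => ∫ g in B, (Amat f g * T * (Amat f g)ᴴ) p q ∂μ

/-- Pointwise risk. -/
def Dpt {d : ℕ} (w : G → G → ℝ)
    (ν : (Set G → Matrix (Fin d × Fin d) (Fin d × Fin d) ℂ) → G → Measure G)
    (M : Set G → Matrix (Fin d × Fin d) (Fin d × Fin d) ℂ) (g : G) : ℝ :=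
  ∫ gh, w g gh ∂(ν M g)

/-- Bayes risk. -/
def Dbayes (μ : Measure G) {d : ℕ} (w : G → G → ℝ)
    (ν : (Set G → Matrix (Fin d × Fin d) (Fin d × Fin d) ℂ) → G → Measure G)
    (M : Set G → Matrix (Fin d × Fin d) (Fin d × Fin d) ℂ) : ℝ :=
  ∫ g, Dpt w ν M g ∂μ

/-- Minimax risk. -/
def Dmax {d : ℕ} (w : G → G → ℝ)
    (ν : (Set G → Matrix (Fin d × Fin d) (Fin d × Fin d) ℂ) → G → Measure G)
    (M : Set G → Matrix (Fin d × Fin d) (Fin d × Fin d) ℂ) : ℝ :=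
  ⨆ g : G, Dpt w ν M g

/-- Twisted GPOVM `M_g`. -/
def twist {d : ℕ} (f : G → Matrix (Fin d) (Fin d) ℂ)
    (M : Set G → Matrix (Fin d × Fin d) (Fin d × Fin d) ℂ) (g : G) (B : Set G) :
    Matrix (Fin d × Fin d) (Fin d × Fin d) ℂ :=
  (Amat f g)ᴴ * M ((g * ·) '' B) * Amat f g

/-- Matrix of the orthogonal projection onto span {v g}. -/
def P0 {d : ℕ} (f : G → Matrix (Fin d) (Fin d) ℂ) :
    Matrix (Fin d × Fin d) (Fin d × Fin d) ℂ :=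
  Matrix.toEuclideanLin.symm
    ((Submodule.span ℂ (Set.range fun g => vec (f g))).subtype ∘ₗ
      (Submodule.orthogonalProjectionOnto (Submodule.span ℂ (Set.range fun g => vec (f g)))).toLinearMap)


section Aux

variable {d : ℕ}

lemma image_mul_eq_preimage (g : G) (B : Set G) :
    (g * ·) '' B = (fun x => g⁻¹ * x) ⁻¹' B := by
  ext x
  constructor
  · rintro ⟨b, hb, rfl⟩; simpa using hb
  · intro h; exact ⟨g⁻¹ * x, h, by simp⟩

lemma measurableSet_image_mul (g : G) {B : Set G} (hB : MeasurableSet B) :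
    MeasurableSet ((g * ·) '' B) := by
  rw [image_mul_eq_preimage]
  exact hB.preimage (measurable_const_mul _)

lemma Amat_unitary (f : G → Matrix (Fin d) (Fin d) ℂ)
    (hf : ∀ g, f g ∈ Matrix.unitaryGroup (Fin d) ℂ) (g : G) :
    (Amat f g)ᴴ * Amat f g = 1 ∧ Amat f g * (Amat f g)ᴴ = 1 := by
  have hconj : (Amat f g)ᴴ = (f g)ᴴ ⊗ₖ (1 : Matrix (Fin d) (Fin d) ℂ) := by
    ext p q
    simp only [Amat, Matrix.conjTranspose_apply, Matrix.kroneckerMap_apply,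
      Matrix.one_apply, star_mul']
    rcases eq_or_ne p.2 q.2 with h | h
    · simp [h]
    · simp [h, h.symm]
  have h1 : (f g)ᴴ * f g = 1 := by
    have := (hf g).1
    simpa [Matrix.star_eq_conjTranspose] using this
  have h2 : f g * (f g)ᴴ = 1 := by
    have := (hf g).2
    simpa [Matrix.star_eq_conjTranspose] using this
  constructor
  · rw [hconj, Amat, ← Matrix.mul_kronecker_mul, h1, Matrix.one_mul, Matrix.one_kronecker_one]
  · rw [hconj, Amat, ← Matrix.mul_kronecker_mul, h2, Matrix.one_mul, Matrix.one_kronecker_one]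

lemma conj_tsum {n : Type} [Fintype n] [DecidableEq n] (A : Matrix n n ℂ)
    (h1 : Aᴴ * A = 1) (h2 : A * Aᴴ = 1) (N : ℕ → Matrix n n ℂ) :
    Aᴴ * (∑' j, N j) * A = ∑' j, Aᴴ * N j * A := by
  let e : Matrix n n ℂ ≃L[ℂ] Matrix n n ℂ :=
    { toFun := fun X => Aᴴ * X * A
      invFun := fun X => A * X * Aᴴ
      map_add' := fun X Y => by simp [Matrix.mul_add, Matrix.add_mul]
      map_smul' := fun r X => by
        simp [Matrix.mul_smul, Matrix.smul_mul]
      left_inv := fun X => by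
        simp only [← Matrix.mul_assoc]
        rw [h2, Matrix.one_mul, Matrix.mul_assoc, h2, Matrix.mul_one]
      right_inv := fun X => by
        simp only [← Matrix.mul_assoc]
        rw [h1, Matrix.one_mul, Matrix.mul_assoc, h1, Matrix.mul_one]
      continuous_toFun := (continuous_const.matrix_mul continuous_id).matrix_mul continuous_const
      continuous_invFun := (continuous_const.matrix_mul continuous_id).matrix_mul continuous_const }
  exact e.map_tsum

lemma trace_conj {n : Type} [Fintype n] (A N R : Matrix n n ℂ) :
    ((Aᴴ * N * A) * R).trace = (N * (A * R * Aᴴ)).trace := by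
  calc ((Aᴴ * N * A) * R).trace = (Aᴴ * (N * (A * R))).trace := by
        rw [Matrix.mul_assoc, Matrix.mul_assoc]
    _ = ((N * (A * R)) * Aᴴ).trace := Matrix.trace_mul_comm _ _
    _ = (N * (A * R * Aᴴ)).trace := by rw [Matrix.mul_assoc, Matrix.mul_assoc]

lemma Amat_mul_rho (f : G → Matrix (Fin d) (Fin d) ℂ)
    (c : G → G → ℂ) (hc_norm : ∀ g h : G, ‖c g h‖ = 1)
    (hc_proj : ∀ g h : G, f (g * h) = c g h • (f g * f h)) (g g' : G) :
    Amat f g * rho f g' * (Amat f g)ᴴ = rho f (g * g') := by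
  have hc0 : c g g' ≠ 0 := by
    intro h
    have := hc_norm g g'
    simp [h] at this
  have hmul : f g * f g' = (c g g')⁻¹ • f (g * g') := by
    rw [hc_proj g g', smul_smul, inv_mul_cancel₀ hc0, one_smul]
  have hcc : (c g g')⁻¹ * star ((c g g')⁻¹) = 1 := by
    have h1 : c g g' * star (c g g') = 1 := by
      rw [Complex.star_def, Complex.mul_conj]
      norm_cast
      rw [Complex.normSq_eq_norm_sq, hc_norm]
      norm_num
    rw [star_inv₀, ← mul_inv, h1, inv_one]
  have key : ∀ p : Fin d × Fin d,
      (∑ r : Fin d × Fin d, Amat f g p r * f g' r.1 r.2) = (f g * f g') p.1 p.2 := by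
    intro p
    rw [Fintype.sum_prod_type, Matrix.mul_apply]
    refine Finset.sum_congr rfl fun r1 _ => ?_
    simp [Amat, Matrix.kroneckerMap_apply, Matrix.one_apply, mul_ite, ite_mul,
      Finset.sum_ite_eq, Finset.sum_ite_eq']
  ext p q
  have expand : (Amat f g * rho f g' * (Amat f g)ᴴ) p q
      = (∑ r : Fin d × Fin d, Amat f g p r * f g' r.1 r.2)
        * star (∑ s : Fin d × Fin d, Amat f g q s * f g' s.1 s.2) := by
    simp only [Matrix.mul_apply, Matrix.conjTranspose_apply, rho, star_sum, star_mul']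
    rw [Finset.mul_sum]
    refine Finset.sum_congr rfl fun s _ => ?_
    rw [Finset.sum_mul, Finset.sum_mul]
    refine Finset.sum_congr rfl fun r _ => ?_
    ring
  rw [expand, key p, key q, hmul]
  simp only [Matrix.smul_apply, smul_eq_mul, rho, star_mul']
  calc ((c g g')⁻¹ * f (g * g') p.1 p.2) * (star ((c g g')⁻¹) * star (f (g * g') q.1 q.2))
      = ((c g g')⁻¹ * star ((c g g')⁻¹)) * (f (g * g') p.1 p.2 * star (f (g * g') q.1 q.2)) := by
        ring
    _ = f (g * g') p.1 p.2 * star (f (g * g') q.1 q.2) := by rw [hcc, one_mul]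

lemma twist_pre (f : G → Matrix (Fin d) (Fin d) ℂ)
    (hf : ∀ g, f g ∈ Matrix.unitaryGroup (Fin d) ℂ) (g : G)
    (M : Set G → Matrix (Fin d × Fin d) (Fin d × Fin d) ℂ)
    (hM : IsPreGPOVM M) : IsPreGPOVM (twist f M g) := by
  obtain ⟨hpos, hempty, hadd⟩ := hM
  obtain ⟨hA1, hA2⟩ := Amat_unitary f hf g
  refine ⟨fun B hB => ?_, ?_, fun B hBm hBd => ?_⟩
  · exact (hpos _ (measurableSet_image_mul g hB)).conjTranspose_mul_mul_same _
  · simp [twist, Set.image_empty, hempty]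
  · have himgU : (g * ·) '' (⋃ j, B j) = ⋃ j, (g * ·) '' (B j) := Set.image_iUnion
    have hdisj : Pairwise (Function.onFun Disjoint fun j => (g * ·) '' B j) := fun i j hij =>
      Set.disjoint_image_of_injective (mul_right_injective g) (hBd hij)
    show (Amat f g)ᴴ * M ((g * ·) '' ⋃ j, B j) * Amat f g = _
    rw [himgU, hadd _ (fun j => measurableSet_image_mul g (hBm j)) hdisj]
    exact conj_tsum (Amat f g) hA1 hA2 _

end Aux

/-- The minimax risk is invariant under twisting. -/
theorem Dmax_twist
    {G : Type} [Group G] [TopologicalSpace G] [IsTopologicalGroup G]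
    [CompactSpace G] [T2Space G] [MeasurableSpace G] [BorelSpace G]
    (μ : Measure G) [μ.IsHaarMeasure] [IsProbabilityMeasure μ]
    {d : ℕ} (hd : 0 < d) (f : G → Matrix (Fin d) (Fin d) ℂ)
    (hf_cont : Continuous f) (hf_one : f 1 = 1)
    (hf_unitary : ∀ g : G, f g ∈ Matrix.unitaryGroup (Fin d) ℂ)
    (c : G → G → ℂ) (hc_norm : ∀ g h : G, ‖c g h‖ = 1)
    (hc_proj : ∀ g h : G, f (g * h) = c g h • (f g * f h))
    (w : G → G → ℝ) (hw_cont : Continuous fun p : G × G => w p.1 p.2)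
    (hw_bdd : ∃ C : ℝ, ∀ g gh : G, |w g gh| ≤ C)
    (hw_cov : ∀ g gh g' : G, w (g' * g) (g' * gh) = w g gh)
    (ν : (Set G → Matrix (Fin d × Fin d) (Fin d × Fin d) ℂ) → G → Measure G)
    (hν : ∀ M : Set G → Matrix (Fin d × Fin d) (Fin d × Fin d) ℂ, IsPreGPOVM M →
      ∀ (g : G) (B : Set G), MeasurableSet B →
        ν M g B = ENNReal.ofReal ((M B * rho f g).trace).re)
    (M : Set G → Matrix (Fin d × Fin d) (Fin d × Fin d) ℂ)
    (hM : IsGPOVM μ f M) (g : G) :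
    Dmax w ν (twist f M g) = Dmax w ν M := by
  obtain ⟨hpre, htr⟩ := hM
  obtain ⟨hA1, hA2⟩ := Amat_unitary f hf_unitary g
  have hpre' : IsPreGPOVM (twist f M g) := twist_pre f hf_unitary g M hpre
  have hmeasure : ∀ g' : G,
      ν (twist f M g) g' = Measure.map (fun x => g⁻¹ * x) (ν M (g * g')) := by
    intro g'
    refine Measure.ext fun B hB => ?_
    rw [Measure.map_apply (measurable_const_mul _) hB, ← image_mul_eq_preimage,
      hν _ hpre' g' B hB, hν M hpre (g * g') _ (measurableSet_image_mul g hB)]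
    have ht : (twist f M g B * rho f g').trace
        = (M ((g * ·) '' B) * rho f (g * g')).trace := by
      rw [twist, trace_conj, Amat_mul_rho f c hc_norm hc_proj g g']
    rw [ht]
  have hDpt : ∀ g' : G, Dpt w ν (twist f M g) g' = Dpt w ν M (g * g') := by
    intro g'
    have hcont : Continuous fun x : G => w g' x :=
      hw_cont.comp (continuous_const.prodMk continuous_id)
    rw [Dpt, hmeasure g',
      integral_map (measurable_const_mul g⁻¹).aemeasurable hcont.aestronglyMeasurable, Dpt]
    refine integral_congr_ae (Filter.Eventually.of_forall fun x => ?_)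
    have h := hw_cov g' (g⁻¹ * x) g
    simpa using h.symm
  rw [Dmax, Dmax, iSup_congr hDpt, iSup, iSup]
  congr 1
  have hs : Function.Surjective (fun g' : G => g * g') := fun y => ⟨g⁻¹ * y, by simp⟩
  exact hs.range_comp fun h => Dpt w ν M h


end GroupEstimation
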